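/- arXiv:2008.05792 — 3 statements merged into one kernel-verified Lean document; each statement's English description precedes it below -/
import Mathlib

section
/- For the slit map s̃(z) = √(z² − 1) mapping the upper half-plane ℍ onto ℍ \ [0,i], and its translate s̃ₓ(z) = x + s̃(z−x), there exists an absolute constant C > 0 such that for all z ∈ ℍ, ∫_{−∞}^{∞} |s̃ₓ(z) − z|² dx < C/(1 + Im z). -/
open Complex MeasureTheory Filter

/-- Complex square root with the branch chosen in the closed upper half-plane. -/
noncomputable def csqrtH (w : ℂ) : ℂ :=
  if 0 ≤ (w ^ (1/2 : ℂ)).im then w ^ (1/2 : ℂ) else -(w ^ (1/2 : ℂ))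

/-- The slit map at `x`: `s̃ₓ(z) = x + √((z-x)² - 1)`, branch mapping ℍ into ℍ. -/
noncomputable def slitAt (x : ℝ) (z : ℂ) : ℂ := x + csqrtH ((z - x) ^ 2 - 1)

/-- The complex derivative of the slit map at `x`: `(z-x)/√((z-x)² - 1)`. -/
noncomputable def slitDerivAt (x : ℝ) (z : ℂ) : ℂ := (z - x) / csqrtH ((z - x) ^ 2 - 1)

lemma csqrtH_sq (w : ℂ) : (csqrtH w) ^ 2 = w := by
  have h : (w ^ (1/2 : ℂ)) ^ 2 = w := by
    by_cases hw : w = 0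
    · simp [hw, Complex.zero_cpow (by norm_num : (1/2 : ℂ) ≠ 0)]
    · rw [sq, ← Complex.cpow_add _ _ hw]
      norm_num
  unfold csqrtH
  split_ifs <;> simpa using h

lemma csqrtH_im_nonneg (w : ℂ) : 0 ≤ (csqrtH w).im := by
  unfold csqrtH
  split_ifs with h
  · exact h
  · simp only [Complex.neg_im]
    linarith [not_le.mp h]

lemma measurable_cpow_half : Measurable fun w : ℂ => w ^ (1/2 : ℂ) := by
  have heq : (fun w : ℂ => w ^ (1/2 : ℂ)) =
      fun w => if w = 0 then 0 else Complex.exp (Complex.log w * (1/2 : ℂ)) := by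
    funext w
    rw [Complex.cpow_def]
    split_ifs with h1 h2
    · exact absurd h2 (by norm_num)
    · rfl
    · rfl
  rw [heq]
  exact Measurable.ite (MeasurableSet.singleton 0) measurable_const
    (Complex.measurable_exp.comp (Complex.measurable_log.mul_const _))

lemma measurable_csqrtH : Measurable csqrtH := by
  unfold csqrtH
  exact Measurable.ite
    (measurableSet_le measurable_const (Complex.measurable_im.comp measurable_cpow_half))
    measurable_cpow_half measurable_cpow_half.neg

/-- The key pointwise estimate: `|√(w²-1) - w|² · (Re w² + Im w² + 1) ≤ 2` for `w ∈ ℍ`. -/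
lemma key_est (w : ℂ) (hw : 0 < w.im) :
    ‖csqrtH (w ^ 2 - 1) - w‖ ^ 2 * (w.re ^ 2 + w.im ^ 2 + 1) ≤ 2 := by
  set s := csqrtH (w ^ 2 - 1) with hs
  have hsq : s ^ 2 = w ^ 2 - 1 := csqrtH_sq _
  have him : 0 ≤ s.im := csqrtH_im_nonneg _
  -- imaginary part of the squares agree
  have him2 : s.re * s.im = w.re * w.im := by
    have := congrArg Complex.im hsq
    simp only [pow_two, Complex.mul_im, Complex.sub_im, Complex.one_im, sub_zero] at this
    linarith
  -- Re s * Re w ≥ 0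
  have ha : 0 ≤ s.re * w.re := by
    rcases eq_or_lt_of_le him with h0 | hpos
    · have : w.re = 0 := by
        by_contra hre
        have : w.re * w.im = 0 := by rw [← him2, ← h0]; ring
        rcases mul_eq_zero.mp this with h | h
        · exact hre h
        · exact absurd h (ne_of_gt hw)
      simp [this]
    · have h1 : 0 ≤ (s.re * w.re) * s.im := by
        have heq : (s.re * w.re) * s.im = w.re ^ 2 * w.im := by
          calc (s.re * w.re) * s.im = (s.re * s.im) * w.re := by ring
            _ = (w.re * w.im) * w.re := by rw [him2]
            _ = w.re ^ 2 * w.im := by ring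
        rw [heq]; positivity
      nlinarith
  -- norms
  have hprod : ‖s - w‖ * ‖s + w‖ = 1 := by
    have hmul : (s - w) * (s + w) = -1 := by
      have : (s - w) * (s + w) = s ^ 2 - w ^ 2 := by ring
      rw [this, hsq]; ring
    calc ‖s - w‖ * ‖s + w‖ = ‖(s - w) * (s + w)‖ := (norm_mul _ _).symm
      _ = ‖(-1 : ℂ)‖ := by rw [hmul]
      _ = 1 := by simp
  have e1 : ‖s + w‖ ^ 2 = (s.re + w.re) ^ 2 + (s.im + w.im) ^ 2 := by
    rw [Complex.sq_norm, Complex.normSq_apply]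
    simp [Complex.add_re, Complex.add_im]; ring
  have e2 : ‖s - w‖ ^ 2 = (s.re - w.re) ^ 2 + (s.im - w.im) ^ 2 := by
    rw [Complex.sq_norm, Complex.normSq_apply]
    simp [Complex.sub_re, Complex.sub_im]; ring
  have hdp0 : (0:ℝ) ≤ ‖s - w‖ := norm_nonneg _
  have hpp0 : (0:ℝ) ≤ ‖s + w‖ := norm_nonneg _
  have hle : ‖s - w‖ ≤ ‖s + w‖ := by
    have hsqle : ‖s - w‖ ^ 2 ≤ ‖s + w‖ ^ 2 := by
      rw [e1, e2]
      nlinarith [mul_nonneg him hw.le]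
    nlinarith
  -- ‖s+w‖ ≥ ‖w‖
  have hW : ‖w‖ ≤ ‖s + w‖ := by
    have h2w : (2:ℝ) * ‖w‖ = ‖(s + w) - (s - w)‖ := by
      have : (s + w) - (s - w) = 2 * w := by ring
      rw [this]
      simp [norm_mul]
    have := norm_sub_le (s + w) (s - w)
    linarith
  -- d^2 ≤ 1
  have hd1 : ‖s - w‖ ^ 2 ≤ 1 := by nlinarith
  -- d^2 * ‖w‖^2 ≤ 1
  have hd2 : ‖s - w‖ ^ 2 * ‖w‖ ^ 2 ≤ 1 := by
    have h1 : ‖s - w‖ * ‖w‖ ≤ ‖s - w‖ * ‖s + w‖ :=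
      mul_le_mul_of_nonneg_left hW hdp0
    have h2 : (‖s - w‖ * ‖w‖) * (‖s - w‖ * ‖w‖) ≤ (‖s - w‖ * ‖s + w‖) * (‖s - w‖ * ‖s + w‖) :=
      mul_le_mul h1 h1 (by positivity) (by positivity)
    nlinarith [h2, hprod]
  have hw2 : ‖w‖ ^ 2 = w.re ^ 2 + w.im ^ 2 := by
    rw [Complex.sq_norm, Complex.normSq_apply]; ring
  rw [hw2] at hd2
  nlinarith

/-- `∫ℝ |s̃ₓ(z) - z|² dx < C/(1 + Im z)` uniformly over `z ∈ ℍ`. -/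
theorem stmt_0 :
    ∃ C > (0:ℝ), ∀ z : ℂ, 0 < z.im →
      Integrable (fun x : ℝ => ‖slitAt x z - z‖ ^ 2) ∧
      (∫ x : ℝ, ‖slitAt x z - z‖ ^ 2) < C / (1 + z.im) := by
  refine ⟨9, by norm_num, fun z hz => ?_⟩
  set y := z.im with hy
  set a := z.re with ha
  set b := Real.sqrt (1 + y ^ 2) with hbdef
  have hb2 : b ^ 2 = 1 + y ^ 2 := Real.sq_sqrt (by positivity)
  have hb0 : 0 < b := Real.sqrt_pos.mpr (by positivity)
  -- rewrite integrand
  have hrw : ∀ x : ℝ, slitAt x z - z = csqrtH ((z - x) ^ 2 - 1) - (z - x) := by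
    intro x; unfold slitAt; ring
  -- pointwise bound
  set h : ℝ → ℝ := fun x => 2 * ((1 + y ^ 2) + (x - a) ^ 2)⁻¹ with hhdef
  have hbound : ∀ x : ℝ, ‖slitAt x z - z‖ ^ 2 ≤ h x := by
    intro x
    rw [hrw x]
    have hwim : 0 < (z - (x:ℂ)).im := by simpa using hz
    have := key_est (z - x) hwim
    have hre : (z - (x:ℂ)).re = a - x := by simp [ha]
    have him : (z - (x:ℂ)).im = y := by simp [hy]
    rw [hre, him] at this
    have hT : (0:ℝ) < (a - x) ^ 2 + y ^ 2 + 1 := by positivity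
    have h1 : ‖csqrtH ((z - x) ^ 2 - 1) - (z - x)‖ ^ 2 ≤ 2 / ((a - x) ^ 2 + y ^ 2 + 1) :=
      (le_div_iff₀ hT).mpr this
    have h2 : 2 / ((a - x) ^ 2 + y ^ 2 + 1) = h x := by
      rw [hhdef]
      have : (a - x) ^ 2 + y ^ 2 + 1 = (1 + y ^ 2) + (x - a) ^ 2 := by ring
      rw [this, div_eq_mul_inv]
    rw [← h2]; exact h1
  -- integrability of the bound
  have hFeq : (fun t : ℝ => 2 * ((1 + y ^ 2) + t ^ 2)⁻¹)
      = fun t : ℝ => (2 / b ^ 2) * (1 + (t / b) ^ 2)⁻¹ := by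
    funext t
    have hben : (1 + y ^ 2) + t ^ 2 = b ^ 2 * (1 + (t / b) ^ 2) := by
      field_simp
      linarith [hb2]
    rw [hben]
    rw [mul_inv]
    ring
  have hIntF : Integrable (fun t : ℝ => 2 * ((1 + y ^ 2) + t ^ 2)⁻¹) := by
    rw [hFeq]
    exact (integrable_inv_one_add_sq.comp_div hb0.ne').const_mul _
  have hIntH : Integrable h := by
    have := hIntF.comp_sub_right a
    simpa [hhdef] using this
  -- measurability of the integrand
  have hmeas : Measurable (fun x : ℝ => ‖slitAt x z - z‖ ^ 2) := by
    have h1 : Measurable fun x : ℝ => slitAt x z - z := by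
      have : Measurable fun x : ℝ => ((z - x) ^ 2 - 1 : ℂ) := by
        exact ((measurable_const.sub Complex.measurable_ofReal).pow_const 2).sub measurable_const
      have h2 : Measurable fun x : ℝ => csqrtH ((z - x) ^ 2 - 1) :=
        measurable_csqrtH.comp this
      exact (Complex.measurable_ofReal.add h2).sub measurable_const
    exact (h1.norm).pow_const 2
  have hIntG : Integrable (fun x : ℝ => ‖slitAt x z - z‖ ^ 2) := by
    refine Integrable.mono' hIntH hmeas.aestronglyMeasurable ?_
    filter_upwards with x
    rw [Real.norm_of_nonneg (by positivity)]
    exact hbound x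
  refine ⟨hIntG, ?_⟩
  have hle : (∫ x : ℝ, ‖slitAt x z - z‖ ^ 2) ≤ ∫ x : ℝ, h x :=
    integral_mono hIntG hIntH hbound
  have hvalF : (∫ t : ℝ, 2 * ((1 + y ^ 2) + t ^ 2)⁻¹) = 2 * Real.pi / b := by
    rw [hFeq]
    rw [integral_const_mul]
    have := MeasureTheory.Measure.integral_comp_div (fun x : ℝ => (1 + x ^ 2)⁻¹) b
    rw [this, integral_univ_inv_one_add_sq]
    rw [abs_of_pos hb0, smul_eq_mul]
    field_simp
  have hvalH : (∫ x : ℝ, h x) = 2 * Real.pi / b := by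
    rw [hhdef]
    have := MeasureTheory.integral_sub_right_eq_self (μ := volume)
      (fun t : ℝ => 2 * ((1 + y ^ 2) + t ^ 2)⁻¹) a
    simpa [hvalF] using this
  rw [hvalH] at hle
  have hfinal : 2 * Real.pi / b < 9 / (1 + y) := by
    rw [div_lt_div_iff₀ hb0 (by linarith : (0:ℝ) < 1 + y)]
    have hpi : Real.pi < 3.15 := by
      have := Real.pi_lt_d2
      linarith
    nlinarith [sq_nonneg (y - 1), sq_nonneg b, Real.pi_pos, sq_nonneg (3 * b - 2 * (1 + y))]
  linarith
end

section
/- There exists an absolute constant C > 0 such that for all z ∈ ℍ and all n ∈ ℕ with n ≥ 2, |∫_{−n}^{n} (s̃ₓ(z) − z) dx| < C log n, where s̃ₓ(z) = x + √((z−x)² − 1). -/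
open Complex MeasureTheory Filter

lemma slit_bound (z : ℂ) (hz : 0 < z.im) (x : ℝ) :
    ‖slitAt x z - z‖ ≤ 2 / (1 + |x - z.re|) := by
  set w : ℂ := z - x with hw
  have hwim : w.im = z.im := by simp [hw]
  have hwre : w.re = z.re - x := by simp [hw]
  set s := csqrtH (w ^ 2 - 1) with hs
  have hsq : s ^ 2 = w ^ 2 - 1 := csqrtH_sq _
  have hsim : 0 ≤ s.im := csqrtH_im_nonneg _
  set u := s.re; set v := s.im; set p := w.re; set q := w.im
  have hq : 0 < q := by rw [hwim]; exact hz
  -- real and imaginary parts of s^2 = w^2 - 1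
  have h1 : u * u - v * v = p * p - q * q - 1 := by
    have := congrArg Complex.re hsq
    simpa [pow_two, Complex.mul_re, Complex.sub_re, Complex.sub_im, Complex.one_re] using this
  have h2 : u * v = p * q := by
    have := congrArg Complex.im hsq
    simp [pow_two, Complex.mul_im, Complex.sub_im] at this
    linarith
  -- v ≥ q
  have him : q ≤ v := by
    by_contra hc
    push_neg at hc
    have h22 : (u * v) * (u * v) = (p * q) * (p * q) := by rw [h2]
    have key : (q * q - v * v) * (p * p + v * v) = -(v * v) := by
      linear_combination v * v * h1 - h22
    have hv2 : v * v < q * q := by nlinarith [hsim, hc, hq]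
    nlinarith [key, hv2, sq_nonneg p, sq_nonneg v, sq_nonneg u, mul_pos hq hq, h1,
      mul_nonneg (sub_pos.mpr hv2).le (add_nonneg (mul_self_nonneg p) (mul_self_nonneg v))]
  set a : ℂ := s - w with ha
  have haw : a * (s + w) = -1 := by
    have hh : a * (s + w) = s ^ 2 - w ^ 2 := by rw [ha]; ring
    rw [hh, hsq]; ring
  have ha0 : a ≠ 0 := by
    intro h
    rw [h, zero_mul] at haw
    exact absurd haw (by norm_num)
  have hsum : s + w = -a⁻¹ := by
    calc s + w = a⁻¹ * (a * (s + w)) := by rw [inv_mul_cancel_left₀ ha0]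
      _ = a⁻¹ * (-1) := by rw [haw]
      _ = -a⁻¹ := by ring
  have haim : a.im = v - q := by simp [ha, Complex.sub_im]; rfl
  have hns0 : 0 < Complex.normSq a := Complex.normSq_pos.mpr ha0
  have him2 : (v + q) * Complex.normSq a = v - q := by
    have h := congrArg Complex.im hsum
    simp only [Complex.add_im, Complex.neg_im, Complex.inv_im, haim] at h
    have : v + q = (v - q) / Complex.normSq a := by
      rw [h]; ring
    field_simp at this
    linarith [this]
  have hnsle : Complex.normSq a ≤ 1 := by nlinarith [him2, hq, him, hns0]
  have hanorm : ‖a‖ ≤ 1 := by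
    have hsqa : ‖a‖ ^ 2 = Complex.normSq a := by
      rw [Complex.sq_norm]
    nlinarith [norm_nonneg a]
  have hprod : ‖a‖ * ‖s + w‖ = 1 := by
    have := congrArg norm haw
    simpa [norm_mul] using this
  have hsum2 : 2 * ‖w‖ - ‖a‖ ≤ ‖s + w‖ := by
    have he : s + w = (a + 2 * w) := by rw [ha]; ring
    have h2w : ‖(2:ℂ) * w‖ = 2 * ‖w‖ := by
      rw [norm_mul]; norm_num
    have htri : ‖(2:ℂ) * w‖ ≤ ‖a + 2 * w‖ + ‖a‖ := by
      calc ‖(2:ℂ) * w‖ = ‖(a + 2 * w) + (-a)‖ := by ring_nf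
        _ ≤ ‖a + 2 * w‖ + ‖(-a)‖ := norm_add_le _ _
        _ = ‖a + 2 * w‖ + ‖a‖ := by rw [norm_neg]
    rw [he]
    linarith [htri, h2w.symm.le, h2w.le]
  have hgoal_eq : slitAt x z - z = a := by
    rw [ha, hs, hw, slitAt]; ring
  rw [hgoal_eq]
  have hwnorm : |x - z.re| ≤ ‖w‖ := by
    have h := Complex.abs_re_le_norm w
    calc |x - z.re| = |w.re| := by
          rw [abs_sub_comm]; congr 1
      _ ≤ _ := h
  set t := |x - z.re| with hT
  have ht0 : 0 ≤ t := abs_nonneg _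
  rcases le_or_gt t 1 with htle | htgt
  · rw [le_div_iff₀ (by positivity)]
    nlinarith [hanorm, norm_nonneg a]
  · rw [le_div_iff₀ (by positivity)]
    have h2t : (0:ℝ) < 2 * t - 1 := by linarith
    have hge : 2 * t - 1 ≤ ‖s + w‖ := by linarith [hsum2, hwnorm, hanorm]
    have hA : ‖a‖ * (2 * t - 1) ≤ 1 := by
      calc ‖a‖ * (2 * t - 1) ≤ ‖a‖ * ‖s + w‖ :=
            mul_le_mul_of_nonneg_left hge (norm_nonneg a)
        _ = 1 := hprod
    nlinarith [hA, norm_nonneg a, htgt]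

lemma cont_g (r : ℝ) : Continuous fun x : ℝ => 1 / (1 + |x - r|) := by
  apply Continuous.div continuous_const
  · continuity
  · intro x; positivity

lemma int_right (r a b : ℝ) (hra : r ≤ a) (hab : a ≤ b) :
    ∫ x in a..b, 1 / (1 + |x - r|) = Real.log ((1 + b - r) / (1 + a - r)) := by
  have hcong : Set.EqOn (fun x : ℝ => 1 / (1 + |x - r|))
      (fun x : ℝ => (fun y : ℝ => 1 / y) (x + (1 - r))) (Set.uIcc a b) := by
    intro x hx
    rw [Set.uIcc_of_le hab] at hx
    simp only
    rw [_root_.abs_of_nonneg (by linarith [hx.1])]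
    ring_nf
  rw [intervalIntegral.integral_congr hcong,
      intervalIntegral.integral_comp_add_right (fun y : ℝ => 1 / y) (1 - r),
      integral_one_div (by
        rw [Set.uIcc_of_le (by linarith)]
        intro hmem
        linarith [hmem.1])]
  try (congr 1; ring)

lemma int_left (r a b : ℝ) (hbr : b ≤ r) (hab : a ≤ b) :
    ∫ x in a..b, 1 / (1 + |x - r|) = Real.log ((1 + r - a) / (1 + r - b)) := by
  have hcong : Set.EqOn (fun x : ℝ => 1 / (1 + |x - r|))
      (fun x : ℝ => (fun y : ℝ => 1 / y) ((1 + r) - x)) (Set.uIcc a b) := by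
    intro x hx
    rw [Set.uIcc_of_le hab] at hx
    simp only
    rw [_root_.abs_of_nonpos (by linarith [hx.2])]
    ring_nf
  rw [intervalIntegral.integral_congr hcong,
      intervalIntegral.integral_comp_sub_left (fun y : ℝ => 1 / y) (1 + r),
      integral_one_div (by
        rw [Set.uIcc_of_le (by linarith)]
        intro hmem
        linarith [hmem.1])]
  try (congr 1; ring)

lemma int_bound (r N : ℝ) (hN : 1 ≤ N) :
    ∫ x in (-N)..N, 1 / (1 + |x - r|) ≤ 2 * Real.log (1 + 2 * N) := by
  have hlog0 : 0 ≤ Real.log (1 + 2 * N) := Real.log_nonneg (by linarith)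
  rcases le_or_gt r (-N) with h1 | h1
  · rw [int_right r (-N) N h1 (by linarith)]
    have hpos : 0 < 1 + -N - r := by linarith
    have harg : (1 + N - r) / (1 + -N - r) ≤ 1 + 2 * N := by
      rw [div_le_iff₀ hpos]; nlinarith
    have hlog := Real.log_le_log (div_pos (by linarith) hpos) harg
    linarith
  rcases le_or_gt N r with h2 | h2
  · rw [int_left r (-N) N h2 (by linarith)]
    have hpos : 0 < 1 + r - N := by linarith
    have harg : (1 + r - -N) / (1 + r - N) ≤ 1 + 2 * N := by
      rw [div_le_iff₀ hpos]; nlinarith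
    have hlog := Real.log_le_log (div_pos (by linarith) hpos) harg
    linarith
  · have hint1 : IntervalIntegrable (fun x : ℝ => 1 / (1 + |x - r|)) volume (-N) r :=
      (cont_g r).intervalIntegrable _ _
    have hint2 : IntervalIntegrable (fun x : ℝ => 1 / (1 + |x - r|)) volume r N :=
      (cont_g r).intervalIntegrable _ _
    have hsplit := intervalIntegral.integral_add_adjacent_intervals hint1 hint2
    rw [← hsplit, int_left r (-N) r le_rfl h1.le, int_right r r N le_rfl h2.le]
    have e1 : Real.log ((1 + r - -N) / (1 + r - r)) ≤ Real.log (1 + 2 * N) := by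
      rw [show (1 + r - r) = 1 by ring, div_one]
      exact Real.log_le_log (by linarith) (by linarith)
    have e2 : Real.log ((1 + N - r) / (1 + r - r)) ≤ Real.log (1 + 2 * N) := by
      rw [show (1 + r - r) = 1 by ring, div_one]
      exact Real.log_le_log (by linarith) (by linarith)
    linarith

/-- `|∫_{-n}^{n} (s̃ₓ(z) - z) dx| < C log n` for all `z ∈ ℍ`, `n ≥ 2`. -/
theorem stmt_4 :
    ∃ C > (0:ℝ), ∀ z : ℂ, 0 < z.im → ∀ n : ℕ, 2 ≤ n →
      ‖∫ x in (-(n:ℝ))..(n:ℝ), (slitAt x z - z)‖ < C * Real.log n := by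
  refine ⟨12, by norm_num, ?_⟩
  intro z hz n hn
  set N : ℝ := (n : ℝ) with hNdef
  have hN2 : (2:ℝ) ≤ N := by rw [hNdef]; exact_mod_cast hn
  have hbound : ∀ᵐ t ∂(volume.restrict (Set.uIoc (-N) N)),
      ‖slitAt t z - z‖ ≤ 2 * (1 / (1 + |t - z.re|)) :=
    MeasureTheory.ae_of_all _ (fun t => by
      rw [mul_one_div]
      exact slit_bound z hz t)
  have hgint : IntervalIntegrable (fun t : ℝ => 2 * (1 / (1 + |t - z.re|))) volume (-N) N :=
    (continuous_const.mul (cont_g z.re)).intervalIntegrable _ _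
  have h1 := intervalIntegral.norm_integral_le_abs_of_norm_le hbound hgint
  have heq : (∫ t in (-N)..N, 2 * (1 / (1 + |t - z.re|)))
      = 2 * ∫ t in (-N)..N, 1 / (1 + |t - z.re|) :=
    intervalIntegral.integral_const_mul _ _
  have hnn : 0 ≤ ∫ t in (-N)..N, 1 / (1 + |t - z.re|) :=
    intervalIntegral.integral_nonneg (by linarith) (fun x _ => by positivity)
  have hb2 := int_bound z.re N (by linarith)
  have hlt : Real.log (1 + 2 * N) < 3 * Real.log N := by
    have h3 : Real.log (N ^ (3:ℕ)) = 3 * Real.log N := by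
      rw [Real.log_pow]; norm_num
    rw [← h3]
    apply Real.log_lt_log (by linarith)
    nlinarith [mul_nonneg (mul_nonneg (by linarith : (0:ℝ) ≤ N - 2) (by linarith : (0:ℝ) ≤ N))
        (by linarith : (0:ℝ) ≤ N),
      mul_nonneg (by linarith : (0:ℝ) ≤ N - 2) (by linarith : (0:ℝ) ≤ N)]
  have habs : |∫ t in (-N)..N, 2 * (1 / (1 + |t - z.re|))|
      = 2 * ∫ t in (-N)..N, 1 / (1 + |t - z.re|) := by
    rw [heq, _root_.abs_of_nonneg (by linarith)]
  calc ‖∫ x in (-N)..N, (slitAt x z - z)‖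
      ≤ |∫ t in (-N)..N, 2 * (1 / (1 + |t - z.re|))| := h1
    _ = 2 * ∫ t in (-N)..N, 1 / (1 + |t - z.re|) := habs
    _ ≤ 2 * (2 * Real.log (1 + 2 * N)) := by linarith
    _ < 12 * Real.log N := by linarith
end

section
/- There exists an absolute constant C > 0 such that for all z ∈ ℍ and all n ≥ max(4, 2|Re z|), ∫_{|x| > n} |s̃ₓ(z) − z|² dx < C/n, where s̃ₓ(z) = x + √((z−x)² − 1). -/
open Complex MeasureTheory Filter

lemma slit_key (z : ℂ) (hz : 0 < z.im) {x : ℝ} (hx2 : 2 * |z.re| ≤ |x|) (hx0 : 0 < |x|) :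
    ‖slitAt x z - z‖ ^ 2 ≤ 4 / x ^ 2 := by
  set v : ℂ := csqrtH ((z - (x:ℂ)) ^ 2 - 1) with hv
  set w : ℂ := z - (x:ℂ) with hw
  have hslit : slitAt x z - z = v - w := by
    rw [slitAt, hw]; ring
  have hvsq : v ^ 2 = w ^ 2 - 1 := csqrtH_sq _
  have hvim : 0 ≤ v.im := csqrtH_im_nonneg _
  have hwim : w.im = z.im := by simp [hw]
  have hwre : w.re = z.re - x := by simp [hw]
  have habs : |x| / 2 ≤ |w.re| := by
    have h1 : |x| - |z.re| ≤ |x - z.re| := abs_sub_abs_le_abs_sub x z.re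
    have h2 : |x - z.re| = |w.re| := by rw [hwre, abs_sub_comm]
    linarith
  have hwre0 : w.re ≠ 0 := by
    intro h; rw [h] at habs; simp at habs; linarith
  have heq : 2 * v.re * v.im = 2 * w.re * w.im := by
    have h := congrArg Complex.im hvsq
    simp only [sq, Complex.mul_im, Complex.sub_im, Complex.one_im] at h
    linarith
  have hvim_pos : 0 < v.im := by
    rcases hvim.lt_or_eq with h | h
    · exact h
    · exfalso
      rw [← h] at heq
      rw [hwim] at heq
      simp at heq
      rcases heq with h1 | h1
      · exact hwre0 h1
      · linarith
  have hsign : 0 < v.re * w.re := by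
    have h2 : v.re * w.re * v.im = w.re ^ 2 * z.im := by
      have : v.re * v.im = w.re * z.im := by rw [hwim] at heq; linarith
      linear_combination w.re * this
    have h3 : 0 < w.re ^ 2 * z.im :=
      mul_pos (lt_of_le_of_ne (sq_nonneg w.re) (Ne.symm (pow_ne_zero 2 hwre0))) hz
    by_contra hcon
    push_neg at hcon
    have : v.re * w.re * v.im ≤ 0 := mul_nonpos_of_nonpos_of_nonneg hcon hvim_pos.le
    linarith
  have hsum : |w.re| ≤ |(v + w).re| := by
    have hre : (v + w).re = v.re + w.re := by simp
    rcases lt_or_gt_of_ne hwre0 with h | h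
    · have hvr : v.re < 0 := by nlinarith
      rw [hre, abs_of_neg h, abs_of_neg (by linarith : v.re + w.re < 0)]; linarith
    · have hvr : 0 < v.re := by nlinarith
      rw [hre, abs_of_pos h, abs_of_pos (by linarith : 0 < v.re + w.re)]; linarith
  have hnormsum : |w.re| ≤ ‖v + w‖ :=
    le_trans hsum (by exact Complex.abs_re_le_norm _)
  have hprod : ‖v - w‖ * ‖v + w‖ = 1 := by
    rw [← norm_mul]
    have : (v - w) * (v + w) = -1 := by linear_combination hvsq
    rw [this]; simp
  have hb : ‖v - w‖ ≤ 2 / |x| := by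
    have h1 : ‖v - w‖ * (|x| / 2) ≤ ‖v - w‖ * ‖v + w‖ :=
      mul_le_mul_of_nonneg_left (le_trans habs hnormsum) (norm_nonneg _)
    rw [hprod] at h1
    rw [le_div_iff₀ hx0]
    nlinarith [norm_nonneg (v - w)]
  rw [hslit]
  calc ‖v - w‖ ^ 2 ≤ (2 / |x|) ^ 2 := by
        exact pow_le_pow_left₀ (norm_nonneg _) hb 2
    _ = 4 / x ^ 2 := by rw [div_pow, _root_.sq_abs]; norm_num

lemma meas_integrand (z : ℂ) : Measurable fun x : ℝ => ‖slitAt x z - z‖ ^ 2 := by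
  have h1 : Measurable fun x : ℝ => slitAt x z - z := by
    have : Measurable fun x : ℝ => (x : ℂ) := Complex.measurable_ofReal
    exact ((this.add (measurable_csqrtH.comp
      (((measurable_const.sub this).pow_const 2).sub measurable_const))).sub measurable_const)
  exact (h1.norm).pow_const 2

lemma g_int_Ioi {n : ℝ} (hn : 0 < n) :
    IntegrableOn (fun x : ℝ => 4 / x ^ 2) (Set.Ioi n) := by
  have h1 : IntegrableOn (fun x : ℝ => 4 * x ^ (-2 : ℝ)) (Set.Ioi n) :=
    (integrableOn_Ioi_rpow_of_lt (by norm_num) hn).const_mul 4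
  refine h1.congr_fun (fun x hx => ?_) measurableSet_Ioi
  have hx0 : (0:ℝ) < x := lt_trans hn hx
  have hr : x ^ (-2:ℝ) = (x ^ 2)⁻¹ := by
    rw [show (-2:ℝ) = -((2:ℕ):ℝ) by norm_num, Real.rpow_neg hx0.le, Real.rpow_natCast]
  show (4:ℝ) * x ^ (-2:ℝ) = 4 / x ^ 2
  rw [hr]; ring

lemma g_int_Iio {n : ℝ} (hn : 0 < n) :
    IntegrableOn (fun x : ℝ => 4 / x ^ 2) (Set.Iio (-n)) := by
  have hmap : (volume.restrict (Set.Ioi n)).map Neg.neg = volume.restrict (Set.Iio (-n)) := by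
    conv => rhs; rw [← Measure.map_neg_eq_self (volume : Measure ℝ),
      measurableEmbedding_neg.restrict_map]
    congr 1
    ext x
    simp [lt_neg]
  rw [IntegrableOn, ← hmap, measurableEmbedding_neg.integrable_map_iff]
  have : ((fun x : ℝ => 4 / x ^ 2) ∘ Neg.neg) = fun x : ℝ => 4 / x ^ 2 := by
    funext x; simp only [Function.comp_apply]; rw [neg_pow]; norm_num
  rw [this]
  exact g_int_Ioi hn

lemma g_integral_Ioi {n : ℝ} (hn : 0 < n) : ∫ x in Set.Ioi n, 4 / x ^ 2 = 4 / n := by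
  have h1 : ∫ x in Set.Ioi n, 4 / x ^ 2 = ∫ x in Set.Ioi n, 4 * x ^ (-2 : ℝ) := by
    refine setIntegral_congr_fun measurableSet_Ioi fun x hx => ?_
    have hx0 : (0:ℝ) < x := lt_trans hn hx
    have hr : x ^ (-2:ℝ) = (x ^ 2)⁻¹ := by
      rw [show (-2:ℝ) = -((2:ℕ):ℝ) by norm_num, Real.rpow_neg hx0.le, Real.rpow_natCast]
    rw [hr]; ring
  rw [h1, integral_const_mul, integral_Ioi_rpow_of_lt (by norm_num) hn]
  rw [show (-2:ℝ) + 1 = -1 by norm_num, Real.rpow_neg_one]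
  field_simp

lemma g_integral_Iio {n : ℝ} (hn : 0 < n) : ∫ x in Set.Iio (-n), 4 / x ^ 2 = 4 / n := by
  have h0 : ∫ x in Set.Iio (-n), 4 / x ^ 2 = ∫ x in Set.Iic (-n), 4 / x ^ 2 :=
    setIntegral_congr_set Iio_ae_eq_Iic
  have h1 : ∫ x in Set.Iic (-n), (fun y : ℝ => 4 / y ^ 2) (-x) = ∫ x in Set.Ioi n, 4 / x ^ 2 := by
    rw [integral_comp_neg_Iic (-n) (fun y : ℝ => 4 / y ^ 2), neg_neg]
  rw [h0, ← g_integral_Ioi hn, ← h1]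
  congr 1
  funext x
  show (4:ℝ) / x ^ 2 = 4 / (-x) ^ 2
  rw [neg_pow]; norm_num

/-- `∫_{|x|>n} |s̃ₓ(z) - z|² dx < C/n` whenever `n ≥ max(4, 2|Re z|)`. -/
theorem stmt_6 :
    ∃ C > (0:ℝ), ∀ z : ℂ, 0 < z.im → ∀ n : ℝ, max 4 (2 * |z.re|) ≤ n →
      IntegrableOn (fun x : ℝ => ‖slitAt x z - z‖ ^ 2) {x : ℝ | n < |x|} ∧
      (∫ x in {x : ℝ | n < |x|}, ‖slitAt x z - z‖ ^ 2) < C / n := by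
  refine ⟨9, by norm_num, fun z hz n hn => ?_⟩
  have hn4 : (4:ℝ) ≤ n := le_trans (le_max_left _ _) hn
  have hnre : 2 * |z.re| ≤ n := le_trans (le_max_right _ _) hn
  have hn0 : (0:ℝ) < n := by linarith
  have hs : {x : ℝ | n < |x|} = Set.Iio (-n) ∪ Set.Ioi n := by
    ext x
    simp only [Set.mem_setOf_eq, Set.mem_union, Set.mem_Iio, Set.mem_Ioi, lt_abs, lt_neg]
    tauto
  have hsm : MeasurableSet {x : ℝ | n < |x|} := by
    rw [hs]; exact measurableSet_Iio.union measurableSet_Ioi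
  have hkey : ∀ x ∈ {x : ℝ | n < |x|}, ‖slitAt x z - z‖ ^ 2 ≤ 4 / x ^ 2 := by
    intro x hx
    simp only [Set.mem_setOf_eq] at hx
    exact slit_key z hz (le_trans hnre hx.le) (lt_trans hn0 hx)
  have hgs : IntegrableOn (fun x : ℝ => 4 / x ^ 2) {x : ℝ | n < |x|} := by
    rw [hs]; exact (g_int_Iio hn0).union (g_int_Ioi hn0)
  have hf : IntegrableOn (fun x : ℝ => ‖slitAt x z - z‖ ^ 2) {x : ℝ | n < |x|} := by
    refine hgs.mono' ((meas_integrand z).aestronglyMeasurable.restrict) ?_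
    refine (ae_restrict_iff' hsm).mpr (ae_of_all _ fun x hx => ?_)
    rw [Real.norm_eq_abs, _root_.abs_of_nonneg (by positivity)]
    exact hkey x hx
  refine ⟨hf, ?_⟩
  have hmono : (∫ x in {x : ℝ | n < |x|}, ‖slitAt x z - z‖ ^ 2)
      ≤ ∫ x in {x : ℝ | n < |x|}, 4 / x ^ 2 := setIntegral_mono_on hf hgs hsm hkey
  have hdisj : Disjoint (Set.Iio (-n)) (Set.Ioi n) := by
    rw [Set.disjoint_left]
    intro x hx1 hx2
    simp only [Set.mem_Iio] at hx1
    simp only [Set.mem_Ioi] at hx2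
    linarith
  have hval : (∫ x in {x : ℝ | n < |x|}, 4 / x ^ 2) = 8 / n := by
    rw [hs, setIntegral_union hdisj measurableSet_Ioi (g_int_Iio hn0) (g_int_Ioi hn0),
      g_integral_Iio hn0, g_integral_Ioi hn0]
    ring
  have hlt : (8:ℝ) / n < 9 / n := by
    rw [div_lt_div_iff₀ hn0 hn0]; nlinarith
  linarith [hmono, hval ▸ hmono]
end
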